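/- (Sufficiency part of Uhlmann's theorem, as a corollary of Theorem 2.) Let p_1,…,p_M be nonnegative reals with Σ_k p_k = 1 and let U_1,…,U_M be unitary operators on ℂ^D. Then for every density matrix ρ₁ on ℂ^D, the density matrix ρ₂ = Σ_k p_k U_k ρ₁ U_k† satisfies λ(ρ₂) ≺ λ(ρ₁). -/

import Mathlib

open Matrix BigOperators
open scoped ComplexOrder

/-- The sum of the `k` largest entries of `x`, expressed as the supremum of the
sums of `x` over all subsets of cardinality `k`. -/
noncomputable def kMaxSum {D : ℕ} (x : Fin D → ℝ) (k : ℕ) : ℝ :=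
  sSup ((fun A : Finset (Fin D) => ∑ i ∈ A, x i) '' {A : Finset (Fin D) | A.card = k})

/-- `x` is majorized by `y` (`x ≺ y`): every partial sum of the `k` largest
entries of `x` is at most the corresponding sum for `y`, and the total sums
coincide. -/
def MajorizedBy {D : ℕ} (x y : Fin D → ℝ) : Prop :=
  (∀ k, k ≤ D → kMaxSum x k ≤ kMaxSum y k) ∧ (∑ i, x i = ∑ i, y i)

lemma le_kMaxSum {D : ℕ} (x : Fin D → ℝ) (A : Finset (Fin D)) :
    ∑ i ∈ A, x i ≤ kMaxSum x A.card :=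
  le_csSup ((Set.toFinite _).image _).bddAbove ⟨A, rfl, rfl⟩

lemma kMaxSum_le {D : ℕ} (x : Fin D → ℝ) {k : ℕ} (hk : k ≤ D) {C : ℝ}
    (h : ∀ A : Finset (Fin D), A.card = k → ∑ i ∈ A, x i ≤ C) : kMaxSum x k ≤ C := by
  apply csSup_le
  · obtain ⟨A, -, hA⟩ := Finset.exists_subset_card_eq (s := (Finset.univ : Finset (Fin D))) (n := k)
      (by simpa using hk)
    exact ⟨_, A, hA, rfl⟩
  · rintro y ⟨A, hA, rfl⟩; exact h A hA

lemma sum_mul_le_kMaxSum {D : ℕ} (x t : Fin D → ℝ) (ht0 : ∀ j, 0 ≤ t j)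
    (ht1 : ∀ j, t j ≤ 1) (k : ℕ) (hts : ∑ j, t j = (k : ℝ)) (hk : k ≤ D) :
    ∑ j, x j * t j ≤ kMaxSum x k := by
  have hS : ((Finset.univ : Finset (Fin D)).powersetCard k).Nonempty :=
    Finset.powersetCard_nonempty.2 (by simpa using hk)
  obtain ⟨A, hAmem, hAmax⟩ := Finset.exists_max_image _ (fun B => ∑ i ∈ B, x i) hS
  have hAcard : A.card = k := (Finset.mem_powersetCard.mp hAmem).2
  have hle : ∑ j, x j * t j ≤ ∑ i ∈ A, x i := by
    rcases Nat.eq_zero_or_pos k with hk0 | hkpos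
    · have htz : ∀ j ∈ Finset.univ, t j = 0 := by
        rw [← Finset.sum_eq_zero_iff_of_nonneg (fun i _ => ht0 i)]
        rw [hts, hk0]; norm_num
      have hA0 : A = ∅ := Finset.card_eq_zero.mp (by rw [hAcard, hk0])
      simp only [hA0, Finset.sum_empty]
      apply le_of_eq
      apply Finset.sum_eq_zero
      intro j hj; rw [htz j hj, mul_zero]
    · have hAne : A.Nonempty := Finset.card_pos.mp (by omega)
      obtain ⟨i₀, hi₀A, hi₀min⟩ := Finset.exists_min_image A x hAne
      set μ := x i₀ with hμdef
      have hout : ∀ j ∉ A, x j ≤ μ := by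
        intro j hj
        have hjne : j ∉ A.erase i₀ := fun h => hj (Finset.mem_of_mem_erase h)
        have hBcard : (insert j (A.erase i₀)).card = k := by
          rw [Finset.card_insert_of_notMem hjne, Finset.card_erase_of_mem hi₀A, hAcard]
          omega
        have hB := hAmax _ (Finset.mem_powersetCard.mpr ⟨Finset.subset_univ _, hBcard⟩)
        rw [Finset.sum_insert hjne, Finset.sum_erase_eq_sub hi₀A] at hB
        linarith
      have h1 : ∑ i ∈ A, x i * t i ≤ ∑ i ∈ A, (x i + μ * t i - μ) := by
        apply Finset.sum_le_sum; intro i hi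
        have h := hi₀min i hi
        nlinarith [ht1 i, ht0 i]
      have h2 : ∑ j ∈ Aᶜ, x j * t j ≤ ∑ j ∈ Aᶜ, μ * t j := by
        apply Finset.sum_le_sum; intro j hj
        have hj' := Finset.mem_compl.mp hj
        nlinarith [ht0 j, hout j hj']
      have h3 : ∑ i ∈ A, (x i * t i) + ∑ j ∈ Aᶜ, (x j * t j) = ∑ j, x j * t j :=
        Finset.sum_add_sum_compl A _
      have h4 : ∑ i ∈ A, t i + ∑ j ∈ Aᶜ, t j = ∑ j, t j := Finset.sum_add_sum_compl A _
      have h5 : ∑ i ∈ A, (x i + μ * t i - μ) =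
          ∑ i ∈ A, x i + μ * ∑ i ∈ A, t i - μ * (k : ℝ) := by
        rw [Finset.sum_sub_distrib, Finset.sum_add_distrib, ← Finset.mul_sum,
          Finset.sum_const, hAcard]
        ring
      have h6 : ∑ j ∈ Aᶜ, μ * t j = μ * ∑ j ∈ Aᶜ, t j := by rw [Finset.mul_sum]
      have h7 : μ * ∑ i ∈ A, t i + μ * ∑ j ∈ Aᶜ, t j = μ * (k : ℝ) := by
        rw [← mul_add, h4, hts]
      linarith
  calc ∑ j, x j * t j ≤ ∑ i ∈ A, x i := hle
    _ ≤ kMaxSum x k := hAcard ▸ le_kMaxSum x A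

lemma diag_conj_entry {D : ℕ} (X : Matrix (Fin D) (Fin D) ℂ) (d : Fin D → ℂ) (i : Fin D) :
    (X * Matrix.diagonal d * star X) i i = ∑ j, d j * ((Complex.normSq (X i j) : ℂ)) := by
  rw [Matrix.mul_apply]
  apply Finset.sum_congr rfl
  intro j _
  rw [Matrix.mul_diagonal, Matrix.star_apply, ← Complex.mul_conj]
  ring_nf
  rfl

/-- **Sufficiency part of Uhlmann's theorem.**  If `p` is a probability
distribution and the `U k` are unitary, then for every density matrix `ρ₁` the
random-unitary output `ρ₂ = Σ p_k U_k ρ₁ U_k†` satisfies `λ(ρ₂) ≺ λ(ρ₁)`. -/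
theorem uhlmann_sufficiency {D M : ℕ}
    (p : Fin M → ℝ)
    (hp : ∀ k, 0 ≤ p k) (hpsum : ∑ k, p k = 1)
    (U : Fin M → Matrix (Fin D) (Fin D) ℂ)
    (hU : ∀ k, U k ∈ Matrix.unitaryGroup (Fin D) ℂ)
    (ρ1 : Matrix (Fin D) (Fin D) ℂ)
    (hρ1 : ρ1.PosSemidef) (hρ1tr : ρ1.trace = 1)
    (hρ2 : (∑ k, (p k : ℂ) • (U k * ρ1 * (U k)ᴴ)).IsHermitian) :
    MajorizedBy hρ2.eigenvalues hρ1.1.eigenvalues := by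
  set ρ2 : Matrix (Fin D) (Fin D) ℂ := ∑ k, (p k : ℂ) • (U k * ρ1 * (U k)ᴴ) with hρ2def
  set V : Matrix (Fin D) (Fin D) ℂ := (Matrix.IsHermitian.eigenvectorUnitary hρ2 : Matrix (Fin D) (Fin D) ℂ) with hVdef
  set W : Matrix (Fin D) (Fin D) ℂ := (Matrix.IsHermitian.eigenvectorUnitary hρ1.1 : Matrix (Fin D) (Fin D) ℂ) with hWdef
  set μ : Fin D → ℝ := hρ2.eigenvalues with hμdef
  set lam : Fin D → ℝ := hρ1.1.eigenvalues with hlamdef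
  set X : Fin M → Matrix (Fin D) (Fin D) ℂ := fun m => star V * (U m * W) with hXdef
  have hVmem : V ∈ Matrix.unitaryGroup (Fin D) ℂ := (Matrix.IsHermitian.eigenvectorUnitary hρ2).2
  have hWmem : W ∈ Matrix.unitaryGroup (Fin D) ℂ := (Matrix.IsHermitian.eigenvectorUnitary hρ1.1).2
  have hXmem : ∀ m, X m ∈ Matrix.unitaryGroup (Fin D) ℂ := fun m =>
    mul_mem (Unitary.star_mem hVmem) (mul_mem (hU m) hWmem)
  -- row and column sums of |X m i j|^2
  have hrow : ∀ m i, ∑ j, Complex.normSq (X m i j) = 1 := by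
    intro m i
    have h1 : (X m * star (X m)) i i = 1 := by
      rw [Matrix.mem_unitaryGroup_iff.mp (hXmem m)]; simp [Matrix.one_apply]
    rw [Matrix.mul_apply] at h1
    have : (↑(∑ j, Complex.normSq (X m i j)) : ℂ) = 1 := by
      push_cast
      rw [← h1]
      apply Finset.sum_congr rfl
      intro j _
      rw [Matrix.star_apply, ← Complex.mul_conj]
      rfl
    exact_mod_cast this
  have hcol : ∀ m j, ∑ i, Complex.normSq (X m i j) = 1 := by
    intro m j
    have h1 : (star (X m) * X m) j j = 1 := by
      rw [Matrix.mem_unitaryGroup_iff'.mp (hXmem m)]; simp [Matrix.one_apply]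
    rw [Matrix.mul_apply] at h1
    have : (↑(∑ i, Complex.normSq (X m i j)) : ℂ) = 1 := by
      push_cast
      rw [← h1]
      apply Finset.sum_congr rfl
      intro i _
      rw [Matrix.star_apply, ← Complex.mul_conj]
      ring_nf
      rfl
    exact_mod_cast this
  -- conjugated summands
  have hXm : ∀ m, star V * (U m * ρ1 * (U m)ᴴ) * V
      = X m * Matrix.diagonal (RCLike.ofReal ∘ lam) * star (X m) := by
    intro m
    have hsp : ρ1 = W * Matrix.diagonal (RCLike.ofReal ∘ lam) * star W :=
      hρ1.1.spectral_theorem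
    rw [hsp, hXdef]
    simp only [Matrix.star_mul, star_star, ← Matrix.star_eq_conjTranspose, Matrix.mul_assoc]
  -- diagonal identity
  have hdiag : Matrix.diagonal (RCLike.ofReal ∘ μ) = star V * ρ2 * V :=
    (by
      have h := hρ2.conjStarAlgAut_star_eigenvectorUnitary
      simp only [Unitary.conjStarAlgAut_apply, Unitary.coe_star, star_star] at h
      exact h : star V * ρ2 * V = Matrix.diagonal (RCLike.ofReal ∘ μ)).symm
  have hexp : star V * ρ2 * V
      = ∑ m, (p m : ℂ) • (X m * Matrix.diagonal (RCLike.ofReal ∘ lam) * star (X m)) := by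
    rw [hρ2def]
    rw [Matrix.mul_sum, Matrix.sum_mul]
    apply Finset.sum_congr rfl
    intro m _
    rw [Matrix.mul_smul, Matrix.smul_mul, hXm m]
  have hμeq : ∀ i, μ i = ∑ m, p m * ∑ j, lam j * Complex.normSq (X m i j) := by
    intro i
    have h1 : (↑(μ i) : ℂ) = (Matrix.diagonal (RCLike.ofReal ∘ μ)) i i := by
      simp [Matrix.diagonal_apply_eq]
    rw [hdiag, hexp] at h1
    have h2 : (↑(μ i) : ℂ)
        = ∑ m, (p m : ℂ) * ∑ j, (lam j : ℂ) * (Complex.normSq (X m i j) : ℂ) := by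
      rw [h1, Matrix.sum_apply]
      apply Finset.sum_congr rfl
      intro m _
      rw [Matrix.smul_apply, diag_conj_entry (X m) (RCLike.ofReal ∘ lam) i, smul_eq_mul]
      rfl
    have h3 : (↑(μ i) : ℂ) = ((∑ m, p m * ∑ j, lam j * Complex.normSq (X m i j) : ℝ) : ℂ) := by
      rw [h2]; push_cast; ring_nf
    exact_mod_cast h3
  constructor
  · intro k hk
    apply kMaxSum_le _ hk
    intro A hA
    -- t m j = ∑ i in A, normSq (X m i j)
    have key : ∑ i ∈ A, μ i = ∑ m, p m * ∑ j, lam j * (∑ i ∈ A, Complex.normSq (X m i j)) := by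
      rw [Finset.sum_congr rfl (fun i _ => hμeq i), Finset.sum_comm]
      apply Finset.sum_congr rfl
      intro m _
      rw [← Finset.mul_sum, Finset.sum_comm]
      congr 1
      apply Finset.sum_congr rfl
      intro j _
      rw [Finset.mul_sum]
    rw [key]
    have hbound : ∀ m, ∑ j, lam j * (∑ i ∈ A, Complex.normSq (X m i j)) ≤ kMaxSum lam k := by
      intro m
      apply sum_mul_le_kMaxSum lam _ _ _ k _ hk
      · intro j
        exact Finset.sum_nonneg fun i _ => Complex.normSq_nonneg _
      · intro j
        calc ∑ i ∈ A, Complex.normSq (X m i j)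
            ≤ ∑ i, Complex.normSq (X m i j) :=
              Finset.sum_le_sum_of_subset_of_nonneg (Finset.subset_univ A)
                (fun i _ _ => Complex.normSq_nonneg _)
          _ = 1 := hcol m j
      · rw [Finset.sum_comm]
        rw [Finset.sum_congr rfl (fun i (_ : i ∈ A) => hrow m i), Finset.sum_const, hA,
          nsmul_eq_mul, mul_one]
    calc ∑ m, p m * ∑ j, lam j * (∑ i ∈ A, Complex.normSq (X m i j))
        ≤ ∑ m, p m * kMaxSum lam k := by
          apply Finset.sum_le_sum
          intro m _
          exact mul_le_mul_of_nonneg_left (hbound m) (hp m)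
      _ = kMaxSum lam k := by rw [← Finset.sum_mul, hpsum, one_mul]
  · -- trace equality
    have htr2 : ρ2.trace = 1 := by
      rw [hρ2def, Matrix.trace_sum]
      have : ∀ m, ((p m : ℂ) • (U m * ρ1 * (U m)ᴴ)).trace = (p m : ℂ) := by
        intro m
        rw [Matrix.trace_smul, Matrix.trace_mul_cycle, ← Matrix.star_eq_conjTranspose,
          Matrix.mem_unitaryGroup_iff'.mp (hU m), Matrix.one_mul, hρ1tr, smul_eq_mul, mul_one]
      rw [Finset.sum_congr rfl (fun m _ => this m)]
      rw [← Complex.ofReal_sum, hpsum, Complex.ofReal_one]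
    have tr_eq : ∀ {B : Matrix (Fin D) (Fin D) ℂ} (hB : B.IsHermitian),
        ((∑ i, hB.eigenvalues i : ℝ) : ℂ) = B.trace := by
      intro B hB
      have h0 := hB.conjStarAlgAut_star_eigenvectorUnitary
      simp only [Unitary.conjStarAlgAut_apply, Unitary.coe_star, star_star] at h0
      have h := congrArg Matrix.trace h0
      rw [Matrix.trace_mul_cycle,
        Matrix.mem_unitaryGroup_iff.mp (Matrix.IsHermitian.eigenvectorUnitary hB).2,
        Matrix.one_mul] at h
      rw [h, Matrix.trace_diagonal]
      push_cast
      rfl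
    have h1 := tr_eq hρ2
    have h2 := tr_eq hρ1.1
    rw [htr2] at h1
    rw [hρ1tr] at h2
    have : ((∑ i, μ i : ℝ) : ℂ) = ((∑ i, lam i : ℝ) : ℂ) := by rw [h1, h2]
    exact_mod_cast this
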